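/- Let λ̃ : [a,b] → ℝ be continuous, L(τ,s) = ∫ₛ^τ λ̃, and let 𝒥 ⊂ ℝ be a compact interval containing L(τ,s) for all s ≤ τ in [a,b]. Let E_n(𝒥) = min over real polynomials p of degree ≤ n of max_{x∈𝒥}|eˣ − p(x)|. Then there exists a ★-polynomial p^★ of degree ≤ n with ‖R^★(λ) − p^★(λ)‖_★(s) ≤ E_n(𝒥)·√(b−s) for every s ∈ [a,b). -/

import Mathlib

open MeasureTheory Set

/-- Heaviside function: `Θ x = 1` if `x ≥ 0`, else `0`. -/
noncomputable def Heaviside (x : ℝ) : ℝ := if 0 ≤ x then 1 else 0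

/-- The `★`-product of two kernels on `[a,b]²`. -/
noncomputable def starProd (a b : ℝ) (g h : ℝ → ℝ → ℂ) : ℝ → ℝ → ℂ :=
  fun t s => ∫ τ in a..b, g t τ * h τ s

/-- `starPow a b f n` is the `(n+1)`-st `★`-power `f^{★(n+1)}`. -/
noncomputable def starPow (a b : ℝ) (f : ℝ → ℝ → ℂ) : ℕ → ℝ → ℝ → ℂ
  | 0 => f
  | n + 1 => starProd a b f (starPow a b f n)

/-- The Heaviside kernel `Θ(t,s) := Θ(t-s)`. -/
noncomputable def thetaK : ℝ → ℝ → ℂ := fun t s => (Heaviside (t - s) : ℝ)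

/-- The kernel `λ(t,s) = λ̃(t)Θ(t-s)`. -/
noncomputable def lamKernel (lam : ℝ → ℝ) : ℝ → ℝ → ℂ :=
  fun t s => (lam t : ℂ) * (Heaviside (t - s) : ℝ)

/-- `Θ ★ R^★(λ)`, with `R^★(λ) = ∑_{k≥0} λ^{★k}`. -/
noncomputable def thetaResolvent (a b : ℝ) (lam : ℝ → ℝ) : ℝ → ℝ → ℂ :=
  fun t s => (Heaviside (t - s) : ℝ)
    + ∑' k : ℕ, starProd a b thetaK (starPow a b (lamKernel lam) k) t s

/-- `Θ ★ p^★(λ)` for the `★`-polynomial `p^★(x) = ∑_{k=0}^n α_k x^{★k}`. -/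
noncomputable def thetaStarPoly (a b : ℝ) (lam : ℝ → ℝ) (α : ℕ → ℂ) (n : ℕ) :
    ℝ → ℝ → ℂ :=
  fun t s => α 0 * (Heaviside (t - s) : ℝ)
    + ∑ k ∈ Finset.range n, α (k + 1) * starProd a b thetaK (starPow a b (lamKernel lam) k) t s

/-- `E_n(J)`: the minimal uniform error of polynomial approximation (degree `≤ n`)
of the exponential on `J`. -/
noncomputable def En (n : ℕ) (J : Set ℝ) : ℝ :=
  sInf {r | ∃ p : Polynomial ℝ, p.natDegree ≤ n ∧
    r = sSup ((fun x => |Real.exp x - Polynomial.eval x p|) '' J)}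

section Best


variable {c d : ℝ} (hcd : c ≤ d)

/-- sup of |u| on Icc c d -/
noncomputable def MW (c d : ℝ) (u : ℝ → ℝ) : ℝ := sSup ((fun x => |u x|) '' Icc c d)

lemma MW_bddAbove {u : ℝ → ℝ} (hu : ContinuousOn u (Icc c d)) :
    BddAbove ((fun x => |u x|) '' Icc c d) :=
  (isCompact_Icc.image_of_continuousOn hu.abs).bddAbove

lemma le_MW {u : ℝ → ℝ} (hu : ContinuousOn u (Icc c d)) {x : ℝ} (hx : x ∈ Icc c d) :
    |u x| ≤ MW c d u := le_csSup (MW_bddAbove hu) (mem_image_of_mem _ hx)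

lemma MW_le (hcd : c ≤ d) {u : ℝ → ℝ} {m : ℝ} (h : ∀ x ∈ Icc c d, |u x| ≤ m) :
    MW c d u ≤ m := csSup_le ((nonempty_Icc.2 hcd).image _) (by rintro r ⟨x, hx, rfl⟩; exact h x hx)

lemma MW_nonneg (hcd : c ≤ d) {u : ℝ → ℝ} (hu : ContinuousOn u (Icc c d)) : 0 ≤ MW c d u :=
  le_trans (abs_nonneg _) (le_MW hu (left_mem_Icc.2 hcd))

lemma MW_smul (hcd : c ≤ d) {u : ℝ → ℝ} (hu : ContinuousOn u (Icc c d)) {t : ℝ} (ht : 0 < t) :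
    MW c d (fun x => t * u x) = t * MW c d u := by
  apply le_antisymm
  · refine MW_le hcd fun x hx => ?_
    rw [abs_mul, abs_of_pos ht]
    exact mul_le_mul_of_nonneg_left (le_MW hu hx) ht.le
  · rw [← le_div_iff₀' ht]
    refine MW_le hcd fun x hx => ?_
    rw [le_div_iff₀' ht]
    calc t * |u x| = |t * u x| := by rw [abs_mul, abs_of_pos ht]
    _ ≤ _ := le_MW (continuousOn_const.mul hu) hx

variable (n : ℕ)

/-- polynomial from coefficient vector -/
noncomputable def Pv (n : ℕ) (β : Fin (n+1) → ℝ) : Polynomial ℝ :=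
  ∑ i : Fin (n+1), Polynomial.C (β i) * Polynomial.X ^ (i : ℕ)

lemma Pv_eval (β : Fin (n+1) → ℝ) (x : ℝ) :
    (Pv n β).eval x = ∑ i : Fin (n+1), β i * x ^ (i : ℕ) := by
  simp [Pv, Polynomial.eval_finset_sum]

lemma Pv_natDegree_le (β : Fin (n+1) → ℝ) : (Pv n β).natDegree ≤ n := by
  refine le_trans (Polynomial.natDegree_sum_le _ _) ?_
  rw [Finset.fold_max_le]
  refine ⟨Nat.zero_le _, fun i _ => ?_⟩
  exact le_trans (Polynomial.natDegree_C_mul_le _ _)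
    (le_trans (Polynomial.natDegree_X_pow _).le (Nat.lt_succ_iff.1 i.isLt))

lemma Pv_coeff (β : Fin (n+1) → ℝ) (j : Fin (n+1)) : (Pv n β).coeff (j : ℕ) = β j := by
  rw [Pv, Polynomial.finset_sum_coeff]
  rw [Finset.sum_eq_single j]
  · simp
  · intro i _ hij
    simp only [Polynomial.coeff_C_mul, Polynomial.coeff_X_pow]
    rw [if_neg (by simpa [Fin.val_eq_val] using (Ne.symm hij)), mul_zero]
  · simp

lemma eval_eq_Pv {q : Polynomial ℝ} (hq : q.natDegree ≤ n) (x : ℝ) :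
    q.eval x = (Pv n (fun i => q.coeff (i : ℕ))).eval x := by
  rw [Pv_eval, Polynomial.eval_eq_sum_range' (Nat.lt_succ_of_le hq),
    ← Fin.sum_univ_eq_sum_range]

/-- the approximation-error functional -/
noncomputable def phiF (n : ℕ) (c d : ℝ) (β : Fin (n+1) → ℝ) : ℝ :=
  MW c d (fun x => Real.exp x - (Pv n β).eval x)

lemma contOn_err (β : Fin (n+1) → ℝ) :
    ContinuousOn (fun x => Real.exp x - (Pv n β).eval x) (Icc c d) :=
  (Real.continuous_exp.sub (Pv n β).continuous).continuousOn

lemma pv_eval_sub (β γ : Fin (n+1) → ℝ) (x : ℝ) :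
    (Pv n β).eval x - (Pv n γ).eval x = (Pv n (β - γ)).eval x := by
  simp [Pv_eval, ← Finset.sum_sub_distrib, sub_mul]

lemma phiF_lip (hcd : c ≤ d) (β γ : Fin (n+1) → ℝ) :
    phiF n c d β ≤ phiF n c d γ + MW c d ((Pv n (β - γ)).eval) := by
  refine MW_le hcd fun x hx => ?_
  have h1 : |Real.exp x - (Pv n β).eval x|
      ≤ |Real.exp x - (Pv n γ).eval x| + |(Pv n γ).eval x - (Pv n β).eval x| := by
    have := abs_sub_le (Real.exp x - (Pv n β).eval x + ((Pv n β).eval x - (Pv n γ).eval x)) 0 0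
    calc |Real.exp x - (Pv n β).eval x| = |(Real.exp x - (Pv n γ).eval x) + ((Pv n γ).eval x - (Pv n β).eval x)| := by ring_nf
    _ ≤ _ := abs_add_le _ _
  refine h1.trans (add_le_add (le_MW (contOn_err n γ) hx) ?_)
  rw [abs_sub_comm, pv_eval_sub]
  exact le_MW (Pv n (β - γ)).continuous.continuousOn hx

/-- sup norm of the polynomial itself -/
noncomputable def NF (n : ℕ) (c d : ℝ) (β : Fin (n+1) → ℝ) : ℝ := MW c d ((Pv n β).eval)

lemma NF_bound (hcd : c ≤ d) (β : Fin (n+1) → ℝ) :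
    NF n c d β ≤ (∑ i : Fin (n+1), max |c| |d| ^ (i : ℕ)) * ‖β‖ := by
  refine MW_le hcd fun x hx => ?_
  rw [Pv_eval, Finset.sum_mul]
  refine le_trans (Finset.abs_sum_le_sum_abs _ _) (Finset.sum_le_sum fun i _ => ?_)
  rw [abs_mul, abs_pow]
  have hxm : |x| ≤ max |c| |d| := abs_le.2 ⟨le_trans (neg_le_neg (le_max_left _ _))
      (le_trans (neg_abs_le c) hx.1), le_trans hx.2 (le_trans (le_abs_self d) (le_max_right _ _))⟩
  calc |β i| * |x| ^ (i:ℕ) ≤ ‖β‖ * max |c| |d| ^ (i:ℕ) := by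
        refine mul_le_mul (norm_le_pi_norm β i) (pow_le_pow_left₀ (abs_nonneg x) hxm _)
          (pow_nonneg (abs_nonneg x) _) (norm_nonneg β)
    _ = max |c| |d| ^ (i:ℕ) * ‖β‖ := mul_comm _ _

lemma NF_lip (hcd : c ≤ d) (β γ : Fin (n+1) → ℝ) :
    NF n c d β ≤ NF n c d γ + (∑ i : Fin (n+1), max |c| |d| ^ (i : ℕ)) * ‖β - γ‖ := by
  refine MW_le hcd fun x hx => ?_
  calc |(Pv n β).eval x| ≤ |(Pv n γ).eval x| + |(Pv n β).eval x - (Pv n γ).eval x| := by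
        have := abs_add_le ((Pv n γ).eval x) ((Pv n β).eval x - (Pv n γ).eval x); simpa using this
  _ ≤ _ := by
      refine add_le_add (le_MW (Pv n γ).continuous.continuousOn hx) ?_
      rw [pv_eval_sub]
      exact le_trans (le_MW (Pv n (β - γ)).continuous.continuousOn hx) (NF_bound n hcd _)

lemma NF_continuous (hcd : c ≤ d) : Continuous (NF n c d) := by
  set C := ∑ i : Fin (n+1), max |c| |d| ^ (i : ℕ) with hC
  have hC0 : 0 ≤ C := Finset.sum_nonneg fun i _ => pow_nonneg (le_max_iff.2 (Or.inl (abs_nonneg c))) _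
  refine (LipschitzWith.of_dist_le_mul (K := ⟨C, hC0⟩) fun β γ => ?_).continuous
  rw [Real.dist_eq, abs_sub_le_iff, dist_eq_norm]
  constructor
  · have := NF_lip n hcd β γ; show _ ≤ C * _; rw [hC]; linarith
  · have := NF_lip n hcd γ β; rw [← norm_neg, neg_sub] at this; show _ ≤ C * _; rw [hC]; linarith

lemma phiF_continuous (hcd : c ≤ d) : Continuous (phiF n c d) := by
  set C := ∑ i : Fin (n+1), max |c| |d| ^ (i : ℕ) with hC
  have hC0 : 0 ≤ C := Finset.sum_nonneg fun i _ => pow_nonneg (le_max_iff.2 (Or.inl (abs_nonneg c))) _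
  refine (LipschitzWith.of_dist_le_mul (K := ⟨C, hC0⟩) fun β γ => ?_).continuous
  have h1 := (phiF_lip n hcd β γ).trans (add_le_add_right (NF_bound n hcd (β - γ)) _)
  have h2 := (phiF_lip n hcd γ β).trans (add_le_add_right (NF_bound n hcd (γ - β)) _)
  rw [← neg_sub, norm_neg] at h2
  rw [Real.dist_eq, abs_sub_le_iff, dist_eq_norm]
  constructor
  · show _ ≤ C * _; rw [hC]; linarith
  · show _ ≤ C * _; rw [hC]; linarith

lemma Pv_eval_smul (t : ℝ) (β : Fin (n+1) → ℝ) (x : ℝ) :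
    (Pv n (t • β)).eval x = t * (Pv n β).eval x := by
  simp [Pv_eval, Finset.mul_sum, mul_assoc]

lemma NF_pos (hcd' : c < d) {β : Fin (n+1) → ℝ} (hβ : β ≠ 0) : 0 < NF n c d β := by
  rcases (MW_nonneg hcd'.le (Pv n β).continuous.continuousOn).lt_or_eq with h | h
  · exact h
  exfalso
  have hzero : ∀ x ∈ Icc c d, (Pv n β).eval x = 0 := by
    intro x hx
    have := le_MW (u := (Pv n β).eval) (Pv n β).continuous.continuousOn hx
    rw [← h] at this
    simpa using le_antisymm this (abs_nonneg _)
  have hp : Pv n β = 0 := by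
    refine Polynomial.eq_zero_of_infinite_isRoot _ (Set.Infinite.mono ?_ (Set.Icc_infinite hcd'))
    intro x hx; exact hzero x hx
  apply hβ
  funext j
  have := Pv_coeff n β j
  rw [hp] at this
  simpa using this.symm

lemma NF_coercive (hcd' : c < d) :
    ∃ m : ℝ, 0 < m ∧ ∀ β : Fin (n+1) → ℝ, m * ‖β‖ ≤ NF n c d β := by
  have hsne : (Metric.sphere (0 : Fin (n+1) → ℝ) 1).Nonempty := by
    refine ⟨fun _ => 1, ?_⟩
    simp [pi_norm_const (1:ℝ)]
  obtain ⟨β₀, hβ₀s, hmin⟩ := (isCompact_sphere (0 : Fin (n+1) → ℝ) 1).exists_isMinOn hsne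
    (NF_continuous n hcd'.le).continuousOn
  have hβ₀ : β₀ ≠ 0 := by
    intro h; rw [h] at hβ₀s; simp at hβ₀s
  refine ⟨NF n c d β₀, NF_pos n hcd' hβ₀, fun β => ?_⟩
  rcases eq_or_ne β 0 with rfl | hβ
  · have : Pv n (0 : Fin (n+1) → ℝ) = 0 := by
      refine Polynomial.ext fun j => ?_
      rcases lt_or_ge j (n+1) with hj | hj
      · have := Pv_coeff n 0 ⟨j, hj⟩; simpa using this
      · rw [Polynomial.coeff_eq_zero_of_natDegree_lt
          (lt_of_le_of_lt (Pv_natDegree_le n 0) hj), Polynomial.coeff_zero]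
    simp only [norm_zero, mul_zero, NF, this]
    exact MW_nonneg hcd'.le (by simpa [this] using (Pv n (0:Fin (n+1) → ℝ)).continuous.continuousOn)
  · have hn0 : 0 < ‖β‖ := norm_pos_iff.2 hβ
    set u : Fin (n+1) → ℝ := ‖β‖⁻¹ • β with hu
    have hus : u ∈ Metric.sphere (0 : Fin (n+1) → ℝ) 1 := by
      simp [hu, norm_smul, abs_of_pos (inv_pos.2 hn0), inv_mul_cancel₀ hn0.ne']
    have hβeq : β = ‖β‖ • u := by rw [hu, smul_smul, mul_inv_cancel₀ hn0.ne', one_smul]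
    have heval : ((Pv n β).eval) = fun x => ‖β‖ * (Pv n u).eval x := by
      funext x
      conv_lhs => rw [hβeq]
      exact Pv_eval_smul n _ u x
    have h1 : NF n c d β = ‖β‖ * NF n c d u := by
      unfold NF
      rw [heval, MW_smul hcd'.le (Pv n u).continuous.continuousOn hn0]
    rw [h1, mul_comm (NF n c d β₀) ‖β‖]
    exact mul_le_mul_of_nonneg_left (hmin hus) (norm_nonneg β)

theorem exists_best (n : ℕ) {c d : ℝ} (hcd : c ≤ d) :
    ∃ q : Polynomial ℝ, q.natDegree ≤ n ∧
      ∀ x ∈ Icc c d, |Real.exp x - q.eval x| ≤ En n (Icc c d) := by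
  have hSne : {r | ∃ p : Polynomial ℝ, p.natDegree ≤ n ∧
      r = sSup ((fun x => |Real.exp x - Polynomial.eval x p|) '' Icc c d)}.Nonempty :=
    ⟨_, 0, by simp, rfl⟩
  have hSlb : ∀ r ∈ {r | ∃ p : Polynomial ℝ, p.natDegree ≤ n ∧
      r = sSup ((fun x => |Real.exp x - Polynomial.eval x p|) '' Icc c d)}, (0:ℝ) ≤ r := by
    rintro r ⟨p, hp, rfl⟩
    exact le_trans (abs_nonneg _)
      (le_MW (Real.continuous_exp.sub p.continuous).continuousOn (left_mem_Icc.2 hcd))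
  rcases eq_or_lt_of_le hcd with rfl | hcd'
  · refine ⟨Polynomial.C (Real.exp c), by simp, fun x hx => ?_⟩
    have hx' : x = c := le_antisymm hx.2 hx.1
    subst hx'
    rw [Polynomial.eval_C, sub_self, abs_zero]
    exact le_csInf hSne hSlb
  · -- coercive minimization
    obtain ⟨m, hm, hcoer⟩ := NF_coercive n hcd'
    set R : ℝ := (phiF n c d 0 + Real.exp d + 1) / m with hR
    have hlower : ∀ β, m * ‖β‖ - Real.exp d ≤ phiF n c d β := by
      intro β
      have h1 : NF n c d β ≤ phiF n c d β + Real.exp d := by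
        refine MW_le hcd fun x hx => ?_
        calc |(Pv n β).eval x| ≤ |Real.exp x - (Pv n β).eval x| + |Real.exp x| := by
              calc |(Pv n β).eval x| = |Real.exp x - (Pv n β).eval x - Real.exp x| := by
                    rw [show Real.exp x - (Pv n β).eval x - Real.exp x
                      = -((Pv n β).eval x) by ring, abs_neg]
              _ ≤ |Real.exp x - (Pv n β).eval x| + |Real.exp x| := abs_sub _ _
        _ ≤ phiF n c d β + Real.exp d := by
              refine add_le_add (le_MW (contOn_err n β) hx) ?_
              rw [abs_of_pos (Real.exp_pos x)]
              exact Real.exp_le_exp.2 hx.2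
      linarith [hcoer β]
    have hR0 : 0 ≤ R := by
      have := MW_nonneg hcd (contOn_err n 0)
      have he := (Real.exp_pos d).le
      positivity
    obtain ⟨β₁, hβ₁b, hmin⟩ := (isCompact_closedBall (0 : Fin (n+1) → ℝ) R).exists_isMinOn
      ⟨0, Metric.mem_closedBall_self hR0⟩ (phiF_continuous n hcd).continuousOn
    have hglobal : ∀ β, phiF n c d β₁ ≤ phiF n c d β := by
      intro β
      rcases le_or_gt ‖β‖ R with h | h
      · exact hmin (by simpa [Metric.mem_closedBall, dist_eq_norm] using h)
      · have h0 : phiF n c d β₁ ≤ phiF n c d 0 := hmin (Metric.mem_closedBall_self hR0)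
        have : phiF n c d 0 + 1 ≤ m * ‖β‖ - Real.exp d := by
          have : m * R < m * ‖β‖ := (mul_lt_mul_iff_right₀ hm).2 h
          rw [hR, mul_div_cancel₀ _ hm.ne'] at this
          linarith
        linarith [hlower β]
    refine ⟨Pv n β₁, Pv_natDegree_le n β₁, fun x hx => ?_⟩
    have h1 : |Real.exp x - (Pv n β₁).eval x| ≤ phiF n c d β₁ := le_MW (contOn_err n β₁) hx
    refine h1.trans (le_csInf hSne ?_)
    rintro r ⟨p, hp, rfl⟩
    have : sSup ((fun x => |Real.exp x - Polynomial.eval x p|) '' Icc c d)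
        = phiF n c d (fun i => p.coeff (i : ℕ)) := by
      unfold phiF MW
      congr 1
      refine Set.image_congr fun x _ => ?_
      show |Real.exp x - p.eval x| = |Real.exp x - (Pv n (fun i => p.coeff (i : ℕ))).eval x|
      rw [eval_eq_Pv n hp]
    rw [this]
    exact hglobal _

lemma Heaviside_of_nonneg {x : ℝ} (h : 0 ≤ x) : Heaviside x = 1 := if_pos h
lemma Heaviside_of_neg {x : ℝ} (h : x < 0) : Heaviside x = 0 := if_neg (not_le.2 h)

section Kernels

variable {lam : ℝ → ℝ} (hlam : Continuous lam) {a b : ℝ} (hab : a ≤ b)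

/-- primitive of lam based at a -/
noncomputable def Lam (a : ℝ) (lam : ℝ → ℝ) : ℝ → ℝ := fun x => ∫ σ in a..x, lam σ

include hlam

lemma Lam_hasDerivAt (a x : ℝ) : HasDerivAt (Lam a lam) (lam x) x :=
  intervalIntegral.integral_hasDerivAt_right (hlam.intervalIntegrable _ _)
    hlam.stronglyMeasurable.stronglyMeasurableAtFilter hlam.continuousAt

lemma Lam_continuous (a : ℝ) : Continuous (Lam a lam) :=
  continuous_iff_continuousAt.2 fun x => (Lam_hasDerivAt hlam a x).continuousAt

lemma integral_eq_Lam_sub (a s t : ℝ) : (∫ σ in s..t, lam σ) = Lam a lam t - Lam a lam s := by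
  rw [Lam, eq_comm]
  exact intervalIntegral.integral_interval_sub_left (hlam.intervalIntegrable _ _) (hlam.intervalIntegrable _ _)

/-- real FTC for lam * L^k -/
lemma ftc_pow (a s t : ℝ) (k : ℕ) :
    (∫ τ in s..t, lam τ * (Lam a lam τ - Lam a lam s) ^ k)
      = (Lam a lam t - Lam a lam s) ^ (k+1) / (k+1) := by
  have hderiv : ∀ x ∈ Set.uIcc s t,
      HasDerivAt (fun u => (Lam a lam u - Lam a lam s) ^ (k+1) / (k+1))
        (lam x * (Lam a lam x - Lam a lam s) ^ k) x := by
    intro x _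
    have h1 := (((Lam_hasDerivAt hlam a x).sub_const (Lam a lam s)).fun_pow (k+1)).div_const ((k:ℝ)+1)
    refine h1.congr_deriv ?_
    rw [Nat.add_sub_cancel]
    push_cast
    field_simp
  have hint : IntervalIntegrable (fun τ => lam τ * (Lam a lam τ - Lam a lam s) ^ k) volume s t :=
    (hlam.mul (((Lam_continuous hlam a).sub continuous_const).pow k)).intervalIntegrable _ _
  rw [intervalIntegral.integral_eq_sub_of_hasDerivAt hderiv hint]
  simp

end Kernels

section Core

variable {lam : ℝ → ℝ} (hlam : Continuous lam) {a b s t : ℝ}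

include hlam

lemma core_integral (hab : a ≤ b) (hs : s ∈ Icc a b) (ht : t ∈ Icc a b) (k : ℕ) :
    (∫ τ in a..b, ((Heaviside (t - τ) : ℝ) : ℂ) *
        ((lam τ : ℂ) * ((∫ σ in s..τ, lam σ : ℝ) : ℂ) ^ k / (k.factorial : ℂ) *
          ((Heaviside (τ - s) : ℝ) : ℂ)))
      = ((∫ σ in s..t, lam σ : ℝ) : ℂ) ^ (k+1) / ((k+1).factorial : ℂ) *
          ((Heaviside (t - s) : ℝ) : ℂ) := by
  rcases lt_or_ge t s with hts | hst
  · have hz : ∀ τ : ℝ, ((Heaviside (t - τ) : ℝ) : ℂ) *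
        ((lam τ : ℂ) * ((∫ σ in s..τ, lam σ : ℝ) : ℂ) ^ k / (k.factorial : ℂ) *
          ((Heaviside (τ - s) : ℝ) : ℂ)) = 0 := by
      intro τ
      rcases le_or_gt τ t with h | h
      · rw [Heaviside_of_neg (by linarith : τ - s < 0)]
        simp
      · rw [Heaviside_of_neg (by linarith : t - τ < 0)]
        simp
    rw [intervalIntegral.integral_congr (g := fun _ => (0:ℂ)) (fun τ _ => hz τ),
      intervalIntegral.integral_zero, Heaviside_of_neg (by linarith : t - s < 0)]
    simp
  · set g : ℝ → ℂ := fun τ =>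
      (lam τ : ℂ) * ((∫ σ in s..τ, lam σ : ℝ) : ℂ) ^ k / (k.factorial : ℂ) with hg
    have hpt : ∀ τ : ℝ, ((Heaviside (t - τ) : ℝ) : ℂ) *
        ((lam τ : ℂ) * ((∫ σ in s..τ, lam σ : ℝ) : ℂ) ^ k / (k.factorial : ℂ) *
          ((Heaviside (τ - s) : ℝ) : ℂ)) = (Icc s t).indicator g τ := by
      intro τ
      by_cases h1 : s ≤ τ
      · by_cases h2 : τ ≤ t
        · rw [Set.indicator_of_mem (Set.mem_Icc.2 ⟨h1, h2⟩), Heaviside_of_nonneg (by linarith : (0:ℝ) ≤ t - τ),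
            Heaviside_of_nonneg (by linarith : (0:ℝ) ≤ τ - s)]
          push_cast
          ring
        · rw [Set.indicator_of_notMem (fun hmem => h2 hmem.2),
            Heaviside_of_neg (by push_neg at h2; linarith : t - τ < 0)]
          simp
      · rw [Set.indicator_of_notMem (fun hmem => h1 hmem.1),
          Heaviside_of_neg (by push_neg at h1; linarith : τ - s < 0)]
        simp
    rw [intervalIntegral.integral_congr (g := (Icc s t).indicator g) (fun τ _ => hpt τ),
      intervalIntegral.integral_of_le hab, MeasureTheory.setIntegral_indicator measurableSet_Icc]
    have hae : (Ioc a b ∩ Icc s t : Set ℝ) =ᵐ[volume] (Ioc s t : Set ℝ) := by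
      have h1 : (Ioc a b ∩ Icc s t : Set ℝ) =ᵐ[volume] (Icc a b ∩ Icc s t : Set ℝ) :=
        MeasureTheory.ae_eq_set_inter Ioc_ae_eq_Icc (Filter.EventuallyEq.refl _ _)
      have h2 : Icc a b ∩ Icc s t = Icc s t :=
        inter_eq_self_of_subset_right (Icc_subset_Icc hs.1 ht.2)
      refine h1.trans ?_
      rw [h2]
      exact Ioc_ae_eq_Icc.symm
    rw [MeasureTheory.setIntegral_congr_set hae, ← intervalIntegral.integral_of_le hst]
    have hgeq : ∀ τ : ℝ, g τ
        = ((lam τ * (Lam a lam τ - Lam a lam s) ^ k : ℝ) : ℂ) / (k.factorial : ℂ) := by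
      intro τ
      rw [hg]
      simp only
      rw [integral_eq_Lam_sub hlam a s τ]
      push_cast
      ring
    rw [intervalIntegral.integral_congr (g := fun τ =>
        ((lam τ * (Lam a lam τ - Lam a lam s) ^ k : ℝ) : ℂ) / (k.factorial : ℂ))
        (fun τ _ => hgeq τ),
      intervalIntegral.integral_div, intervalIntegral.integral_ofReal, ftc_pow hlam a s t k,
      Heaviside_of_nonneg (by linarith : (0:ℝ) ≤ t - s), integral_eq_Lam_sub hlam a s t]
    have hk : ((k.factorial : ℂ)) ≠ 0 := Nat.cast_ne_zero.2 k.factorial_ne_zero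
    have hk1 : ((k:ℂ) + 1) ≠ 0 := by
      have : ((k+1 : ℕ) : ℂ) ≠ 0 := Nat.cast_ne_zero.2 (Nat.succ_ne_zero k)
      push_cast at this
      exact this
    rw [Nat.factorial_succ]
    push_cast
    field_simp

end Core

section SP

variable {lam : ℝ → ℝ} (hlam : Continuous lam) {a b s t : ℝ}

include hlam

lemma starPow_eq (hab : a ≤ b) (hs : s ∈ Icc a b) (k : ℕ) :
    ∀ t ∈ Icc a b, starPow a b (lamKernel lam) k t s
      = (lam t : ℂ) * ((∫ σ in s..t, lam σ : ℝ) : ℂ) ^ k / (k.factorial : ℂ) *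
          ((Heaviside (t - s) : ℝ) : ℂ) := by
  induction k with
  | zero =>
    intro t _
    simp only [starPow, lamKernel, pow_zero, Nat.factorial_zero, Nat.cast_one, mul_one]
    push_cast
    ring
  | succ k ih =>
    intro t ht
    show starProd a b (lamKernel lam) (starPow a b (lamKernel lam) k) t s = _
    rw [starProd]
    rw [intervalIntegral.integral_congr (g := fun τ => (lam t : ℂ) *
        (((Heaviside (t - τ) : ℝ) : ℂ) *
          ((lam τ : ℂ) * ((∫ σ in s..τ, lam σ : ℝ) : ℂ) ^ k / (k.factorial : ℂ) *
            ((Heaviside (τ - s) : ℝ) : ℂ)))) ?_]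
    · rw [intervalIntegral.integral_const_mul, core_integral hlam hab hs ht k]
      ring
    · intro τ hτ
      rw [uIcc_of_le hab] at hτ
      simp only [lamKernel]
      rw [ih τ hτ]
      ring

lemma theta_starPow_eq (hab : a ≤ b) (hs : s ∈ Icc a b) (ht : t ∈ Icc a b) (k : ℕ) :
    starProd a b thetaK (starPow a b (lamKernel lam) k) t s
      = ((∫ σ in s..t, lam σ : ℝ) : ℂ) ^ (k+1) / ((k+1).factorial : ℂ) *
          ((Heaviside (t - s) : ℝ) : ℂ) := by
  rw [starProd]
  rw [intervalIntegral.integral_congr (g := fun τ => ((Heaviside (t - τ) : ℝ) : ℂ) *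
      ((lam τ : ℂ) * ((∫ σ in s..τ, lam σ : ℝ) : ℂ) ^ k / (k.factorial : ℂ) *
        ((Heaviside (τ - s) : ℝ) : ℂ))) ?_]
  · exact core_integral hlam hab hs ht k
  · intro τ hτ
    rw [uIcc_of_le hab] at hτ
    simp only [thetaK]
    rw [starPow_eq hlam hab hs k τ hτ]

end SP

/-- congruence of starPow in lam on the square -/
lemma starPow_congr {lam lam' : ℝ → ℝ} {a b : ℝ} (hab : a ≤ b)
    (h : EqOn lam lam' (Icc a b)) {s : ℝ} (hs : s ∈ Icc a b) (k : ℕ) :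
    ∀ t ∈ Icc a b, starPow a b (lamKernel lam) k t s = starPow a b (lamKernel lam') k t s := by
  induction k with
  | zero =>
    intro t ht
    show lamKernel lam t s = lamKernel lam' t s
    rw [lamKernel, lamKernel, h ht]
  | succ k ih =>
    intro t ht
    show starProd a b (lamKernel lam) (starPow a b (lamKernel lam) k) t s
      = starProd a b (lamKernel lam') (starPow a b (lamKernel lam') k) t s
    rw [starProd, starProd]
    refine intervalIntegral.integral_congr fun τ hτ => ?_
    rw [uIcc_of_le hab] at hτ
    rw [ih τ hτ]
    show lamKernel lam t τ * _ = lamKernel lam' t τ * _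
    rw [lamKernel, lamKernel, h ht]

lemma theta_starPow_congr {lam lam' : ℝ → ℝ} {a b : ℝ} (hab : a ≤ b)
    (h : EqOn lam lam' (Icc a b)) {s t : ℝ} (hs : s ∈ Icc a b) (k : ℕ) :
    starProd a b thetaK (starPow a b (lamKernel lam) k) t s
      = starProd a b thetaK (starPow a b (lamKernel lam') k) t s := by
  rw [starProd, starProd]
  refine intervalIntegral.integral_congr fun τ hτ => ?_
  rw [uIcc_of_le hab] at hτ
  rw [starPow_congr hab h hs k τ hτ]

lemma one_add_tsum_exp (z : ℂ) :
    (1 : ℂ) + ∑' k : ℕ, z ^ (k+1) / ((k+1).factorial : ℂ) = Complex.exp z := by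
  have hs : Summable (fun n : ℕ => z ^ n / (n.factorial : ℂ)) :=
    NormedSpace.expSeries_div_summable z
  have h0 := Summable.tsum_eq_zero_add hs
  rw [Complex.exp_eq_exp_ℂ]
  simp only [NormedSpace.exp_eq_tsum_div]
  rw [h0]
  simp

/-- If `L(τ,s) = ∫_s^τ λ̃` lies in the compact interval `J = [c,d]` for all
`s ≤ τ` in `[a,b]`, then there is a `★`-polynomial `p^★` of degree `≤ n` with
`‖R^★(λ) - p^★(λ)‖_★(s) ≤ E_n(J) √(b-s)` for every `s ∈ [a,b)`. -/
theorem exists_starPoly_error_le (a b : ℝ) (hab : a ≤ b)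
    (lam : ℝ → ℝ) (hlam : ContinuousOn lam (Icc a b))
    (c d : ℝ) (hcd : c ≤ d)
    (hJ : ∀ s τ, a ≤ s → s ≤ τ → τ ≤ b → (∫ σ in s..τ, lam σ) ∈ Icc c d)
    (n : ℕ) :
    ∃ α : ℕ → ℂ, ∀ s ∈ Ico a b,
      Real.sqrt (∫ τ in s..b, ‖
          (thetaResolvent a b lam τ s - thetaStarPoly a b lam α n τ s)‖ ^ 2)
        ≤ En n (Icc c d) * Real.sqrt (b - s) := by
  classical
  obtain ⟨q, hqdeg, hqerr⟩ := exists_best n hcd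
  set lam' : ℝ → ℝ := fun x => lam (max a (min b x)) with hlam'def
  have hproj : ∀ x : ℝ, max a (min b x) ∈ Icc a b :=
    fun x => ⟨le_max_left _ _, max_le hab (min_le_left _ _)⟩
  have hlam' : Continuous lam' := by
    have h1 : Continuous fun x : ℝ => max a (min b x) :=
      continuous_const.max (continuous_const.min continuous_id)
    exact hlam.comp_continuous h1 hproj
  have hEq : EqOn lam lam' (Icc a b) := by
    intro x hx
    simp only [hlam'def]
    rw [min_eq_right hx.2, max_eq_right hx.1]
  refine ⟨fun j => (j.factorial : ℂ) * (q.coeff j : ℂ), ?_⟩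
  intro s hs
  have hsa := hs.1
  have hsb : s ≤ b := hs.2.le
  have hsIcc : s ∈ Icc a b := ⟨hsa, hsb⟩
  set G : ℝ → ℝ := Lam s lam' with hGdef
  have hGc : Continuous G := Lam_continuous hlam' s
  have hGL : ∀ τ ∈ Icc s b, (∫ σ in s..τ, lam σ) = G τ := by
    intro τ hτ
    rw [hGdef, Lam]
    refine intervalIntegral.integral_congr fun σ hσ => hEq ?_
    rw [uIcc_of_le hτ.1] at hσ
    exact ⟨le_trans hsa hσ.1, le_trans hσ.2 hτ.2⟩
  have hGJ : ∀ τ ∈ Icc s b, G τ ∈ Icc c d := by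
    intro τ hτ
    rw [← hGL τ hτ]
    exact hJ s τ hsa hτ.1 hτ.2
  have hEn0 : 0 ≤ En n (Icc c d) := le_trans (abs_nonneg _) (hqerr c ⟨le_refl c, hcd⟩)
  have hpt : ∀ τ ∈ Icc s b,
      thetaResolvent a b lam τ s
        - thetaStarPoly a b lam (fun j => (j.factorial : ℂ) * (q.coeff j : ℂ)) n τ s
        = ((Real.exp (G τ) - q.eval (G τ) : ℝ) : ℂ) := by
    intro τ hτ
    have hτIcc : τ ∈ Icc a b := ⟨le_trans hsa hτ.1, hτ.2⟩
    have hΘ : Heaviside (τ - s) = 1 := Heaviside_of_nonneg (by linarith [hτ.1])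
    have hGτ : (∫ σ in s..τ, lam' σ) = G τ := rfl
    have hterm : ∀ k : ℕ, starProd a b thetaK (starPow a b (lamKernel lam) k) τ s
        = ((G τ : ℝ) : ℂ) ^ (k+1) / ((k+1).factorial : ℂ) := by
      intro k
      rw [theta_starPow_congr hab hEq hsIcc k, theta_starPow_eq hlam' hab hsIcc hτIcc k,
        hGτ, hΘ]
      push_cast
      ring
    have hres : thetaResolvent a b lam τ s = Complex.exp ((G τ : ℝ) : ℂ) := by
      simp only [thetaResolvent]
      rw [hΘ, tsum_congr hterm, Complex.ofReal_one, one_add_tsum_exp]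
    have hpoly : thetaStarPoly a b lam (fun j => (j.factorial : ℂ) * (q.coeff j : ℂ)) n τ s
        = ((q.eval (G τ) : ℝ) : ℂ) := by
      simp only [thetaStarPoly]
      rw [hΘ, Complex.ofReal_one, mul_one]
      have hterm2 : ∀ k ∈ Finset.range n,
          (fun j => (j.factorial : ℂ) * (q.coeff j : ℂ)) (k+1)
            * starProd a b thetaK (starPow a b (lamKernel lam) k) τ s
          = (q.coeff (k+1) : ℂ) * ((G τ : ℝ) : ℂ) ^ (k+1) := by
        intro k _
        rw [hterm k]
        have hk1 : (((k+1).factorial : ℂ)) ≠ 0 := Nat.cast_ne_zero.2 (k+1).factorial_ne_zero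
        field_simp
      rw [Finset.sum_congr rfl hterm2]
      have heval : ((q.eval (G τ) : ℝ) : ℂ)
          = ∑ j ∈ Finset.range (n+1), (q.coeff j : ℂ) * ((G τ : ℝ) : ℂ) ^ j := by
        rw [Polynomial.eval_eq_sum_range' (Nat.lt_succ_of_le hqdeg)]
        push_cast
        rfl
      rw [heval, Finset.sum_range_succ' (fun j => (q.coeff j : ℂ) * ((G τ : ℝ) : ℂ) ^ j) n]
      simp [add_comm]
    rw [hres, hpoly, ← Complex.ofReal_exp, ← Complex.ofReal_sub]
  have hIeq : (∫ τ in s..b, ‖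
        (thetaResolvent a b lam τ s
          - thetaStarPoly a b lam (fun j => (j.factorial : ℂ) * (q.coeff j : ℂ)) n τ s)‖ ^ 2)
      = ∫ τ in s..b, (Real.exp (G τ) - q.eval (G τ)) ^ 2 := by
    refine intervalIntegral.integral_congr fun τ hτ => ?_
    rw [uIcc_of_le hsb] at hτ
    rw [hpt τ hτ, Complex.norm_real, Real.norm_eq_abs, sq_abs]
  rw [hIeq]
  have hintF : IntervalIntegrable (fun τ => (Real.exp (G τ) - q.eval (G τ)) ^ 2) volume s b :=
    (((Real.continuous_exp.comp hGc).sub (q.continuous.comp hGc)).pow 2).intervalIntegrable _ _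
  have hbound : ∀ τ ∈ Icc s b,
      (Real.exp (G τ) - q.eval (G τ)) ^ 2 ≤ En n (Icc c d) ^ 2 := by
    intro τ hτ
    have h := hqerr (G τ) (hGJ τ hτ)
    have h' := abs_le.1 h
    exact sq_le_sq' (by linarith [h'.1]) h'.2
  have hle : (∫ τ in s..b, (Real.exp (G τ) - q.eval (G τ)) ^ 2)
      ≤ (b - s) * En n (Icc c d) ^ 2 := by
    have := intervalIntegral.integral_mono_on hsb hintF intervalIntegrable_const hbound
    simpa [intervalIntegral.integral_const, smul_eq_mul] using this
  calc Real.sqrt (∫ τ in s..b, (Real.exp (G τ) - q.eval (G τ)) ^ 2)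
      ≤ Real.sqrt ((b - s) * En n (Icc c d) ^ 2) := Real.sqrt_le_sqrt hle
  _ = En n (Icc c d) * Real.sqrt (b - s) := by
      rw [show (b - s) * En n (Icc c d) ^ 2
          = (En n (Icc c d) * Real.sqrt (b - s)) ^ 2 by
            rw [mul_pow, Real.sq_sqrt (by linarith)]; ring,
        Real.sqrt_sq (mul_nonneg hEn0 (Real.sqrt_nonneg _))]
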